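/- Let E and F be real inner product spaces, let T : F → E be a continuous linear map, and suppose there are constants 0 < c ≤ C such that c·‖p‖ ≤ ‖T p‖ ≤ C·‖p‖ for all p ∈ F. Let τ, σ > 0 satisfy τσ < 1. Then there exist constants 0 < θ ≤ Θ such that for all u ∈ E and p ∈ F: θ²(‖u‖² + ‖p‖²) ≤ (1/τ)‖u‖² − 2⟪u, T p⟫ + (1/σ)‖T p‖² ≤ Θ²(‖u‖² + ‖p‖²). -/

import Mathlib

open RealInnerProductSpace

set_option maxHeartbeats 1000000

theorem stmt_0
    {E F : Type*} [NormedAddCommGroup E] [InnerProductSpace ℝ E]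
    [NormedAddCommGroup F] [InnerProductSpace ℝ F]
    (T : F →L[ℝ] E) (c C : ℝ) (hc : 0 < c) (hcC : c ≤ C)
    (hbound : ∀ p : F, c * ‖p‖ ≤ ‖T p‖ ∧ ‖T p‖ ≤ C * ‖p‖)
    (τ σ : ℝ) (hτ : 0 < τ) (hσ : 0 < σ) (hτσ : τ * σ < 1) :
    ∃ θ Θ : ℝ, 0 < θ ∧ θ ≤ Θ ∧
      ∀ (u : E) (p : F),
        θ ^ 2 * (‖u‖ ^ 2 + ‖p‖ ^ 2) ≤
            (1 / τ) * ‖u‖ ^ 2 - 2 * ⟪u, T p⟫ + (1 / σ) * ‖T p‖ ^ 2 ∧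
        (1 / τ) * ‖u‖ ^ 2 - 2 * ⟪u, T p⟫ + (1 / σ) * ‖T p‖ ^ 2 ≤
            Θ ^ 2 * (‖u‖ ^ 2 + ‖p‖ ^ 2) := by
  have hστ : σ < 1 / τ := by
    rw [lt_div_iff₀ hτ]; nlinarith
  set s : ℝ := (σ + 1 / τ) / 2 with hs
  have hs0 : 0 < s := by positivity
  have hs1 : σ < s := by rw [hs]; linarith
  have hs2 : s < 1 / τ := by rw [hs]; linarith
  set α : ℝ := 1 / τ - s with hα
  set β : ℝ := 1 / σ - 1 / s with hβ
  have hα0 : 0 < α := by rw [hα]; linarith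
  have hβ0 : 0 < β := by
    rw [hβ]
    have : 1 / s < 1 / σ := one_div_lt_one_div_of_lt hσ hs1
    linarith
  set m : ℝ := min α (β * c ^ 2) with hm
  set M : ℝ := max (1 / τ + 1) ((1 / σ + 1) * C ^ 2) with hM
  have hm0 : 0 < m := lt_min hα0 (by positivity)
  have hmα : m ≤ α := min_le_left _ _
  have hmβ : m ≤ β * c ^ 2 := min_le_right _ _
  have hM1 : (1 : ℝ) / τ + 1 ≤ M := le_max_left _ _
  have hM2 : (1 / σ + 1) * C ^ 2 ≤ M := le_max_right _ _
  have hα1 : α ≤ 1 / τ + 1 := by rw [hα]; linarith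
  clear_value s α β m M
  have hmM : m ≤ M := by linarith
  refine ⟨Real.sqrt m, Real.sqrt M, Real.sqrt_pos.mpr hm0, Real.sqrt_le_sqrt hmM, ?_⟩
  intro u p
  have hsqm : Real.sqrt m ^ 2 = m := Real.sq_sqrt hm0.le
  have hsqM : Real.sqrt M ^ 2 = M := Real.sq_sqrt (hm0.trans_le hmM).le
  rw [hsqm, hsqM]
  have hcs : |⟪u, T p⟫| ≤ ‖u‖ * ‖T p‖ := abs_real_inner_le_norm u (T p)
  have hcs1 : ⟪u, T p⟫ ≤ ‖u‖ * ‖T p‖ := (le_abs_self _).trans hcs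
  have hcs2 : -(‖u‖ * ‖T p‖) ≤ ⟪u, T p⟫ := neg_le_of_abs_le hcs
  obtain ⟨hlo, hhi⟩ := hbound p
  have hu : (0:ℝ) ≤ ‖u‖ := norm_nonneg _
  have hp : (0:ℝ) ≤ ‖p‖ := norm_nonneg _
  have hTp : (0:ℝ) ≤ ‖T p‖ := norm_nonneg _
  have hu2 : (0:ℝ) ≤ ‖u‖ ^ 2 := by positivity
  have hp2 : (0:ℝ) ≤ ‖p‖ ^ 2 := by positivity
  have hsqlo : c ^ 2 * ‖p‖ ^ 2 ≤ ‖T p‖ ^ 2 := by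
    nlinarith [mul_self_le_mul_self (by positivity : (0:ℝ) ≤ c * ‖p‖) hlo]
  have hsqhi : ‖T p‖ ^ 2 ≤ C ^ 2 * ‖p‖ ^ 2 := by
    nlinarith [mul_self_le_mul_self hTp hhi]
  have hamgm : 2 * (‖u‖ * ‖T p‖) ≤ s * ‖u‖ ^ 2 + (1 / s) * ‖T p‖ ^ 2 := by
    have key : 2 * s * (‖u‖ * ‖T p‖) ≤ s ^ 2 * ‖u‖ ^ 2 + ‖T p‖ ^ 2 := by
      nlinarith [sq_nonneg (s * ‖u‖ - ‖T p‖)]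
    have h2 := mul_le_mul_of_nonneg_left key (le_of_lt (one_div_pos.mpr hs0))
    have e1 : (1 / s) * (2 * s * (‖u‖ * ‖T p‖)) = 2 * (‖u‖ * ‖T p‖) := by
      field_simp
    have e2 : (1 / s) * (s ^ 2 * ‖u‖ ^ 2 + ‖T p‖ ^ 2)
        = s * ‖u‖ ^ 2 + (1 / s) * ‖T p‖ ^ 2 := by
      field_simp
    rw [e1, e2] at h2; exact h2
  constructor
  · -- lower bound
    have k1 : α * ‖u‖ ^ 2 + β * ‖T p‖ ^ 2
        ≤ (1 / τ) * ‖u‖ ^ 2 - 2 * ⟪u, T p⟫ + (1 / σ) * ‖T p‖ ^ 2 := by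
      have e1 : α * ‖u‖ ^ 2 = (1 / τ) * ‖u‖ ^ 2 - s * ‖u‖ ^ 2 := by rw [hα]; ring
      have e2 : β * ‖T p‖ ^ 2 = (1 / σ) * ‖T p‖ ^ 2 - (1 / s) * ‖T p‖ ^ 2 := by rw [hβ]; ring
      linarith
    have k2 : β * (c ^ 2 * ‖p‖ ^ 2) ≤ β * ‖T p‖ ^ 2 :=
      mul_le_mul_of_nonneg_left hsqlo hβ0.le
    have k3 : m * (‖u‖ ^ 2 + ‖p‖ ^ 2) ≤ α * ‖u‖ ^ 2 + β * (c ^ 2 * ‖p‖ ^ 2) := by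
      nlinarith [mul_le_mul_of_nonneg_right hmα hu2, mul_le_mul_of_nonneg_right hmβ hp2]
    linarith
  · -- upper bound
    have k1 : (1 / τ) * ‖u‖ ^ 2 - 2 * ⟪u, T p⟫ + (1 / σ) * ‖T p‖ ^ 2
        ≤ (1 / τ + 1) * ‖u‖ ^ 2 + (1 / σ + 1) * ‖T p‖ ^ 2 := by
      have h3 : 2 * (‖u‖ * ‖T p‖) ≤ ‖u‖ ^ 2 + ‖T p‖ ^ 2 := by
        nlinarith [sq_nonneg (‖u‖ - ‖T p‖)]
      have e1 : (1 / τ + 1) * ‖u‖ ^ 2 = (1 / τ) * ‖u‖ ^ 2 + ‖u‖ ^ 2 := by ring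
      have e2 : (1 / σ + 1) * ‖T p‖ ^ 2 = (1 / σ) * ‖T p‖ ^ 2 + ‖T p‖ ^ 2 := by ring
      linarith
    have k2 : (1 / σ + 1) * ‖T p‖ ^ 2 ≤ (1 / σ + 1) * (C ^ 2 * ‖p‖ ^ 2) :=
      mul_le_mul_of_nonneg_left hsqhi (by positivity)
    have k3 : (1 / τ + 1) * ‖u‖ ^ 2 + (1 / σ + 1) * (C ^ 2 * ‖p‖ ^ 2)
        ≤ M * (‖u‖ ^ 2 + ‖p‖ ^ 2) := by
      nlinarith [mul_le_mul_of_nonneg_right hM1 hu2, mul_le_mul_of_nonneg_right hM2 hp2]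
    linarith
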